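/- Let d ≥ 3 and l ≥ 1. Suppose f_1,…,f_l : ℂ^l → ℂ are real-differentiable and satisfy (H1), (H2), (H3) and (H5). Then there is a constant C' > 0 such that for all z, z' ∈ ℂ^l, |Re F(z) − Re F(z')| ≤ C' Σ_{m=1}^l Σ_{j=1}^l (|z_j|^{(d+2)/(d−2)} + |z'_j|^{(d+2)/(d−2)}) |z_m − z'_m|. -/

import Mathlib

open Complex Finset

/-- The Wirtinger derivative `∂/∂z_m` of a real-differentiable function `f : ℂ^l → ℂ`. -/
noncomputable def wD {l : ℕ} (f : (Fin l → ℂ) → ℂ) (z : Fin l → ℂ) (m : Fin l) : ℂ :=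
  (1 / 2 : ℂ) *
    ((fderiv ℝ f z) (Pi.single m 1) - Complex.I * (fderiv ℝ f z) (Pi.single m Complex.I))

/-- The Wirtinger derivative `∂/∂z̄_m` of a real-differentiable function `f : ℂ^l → ℂ`. -/
noncomputable def wDbar {l : ℕ} (f : (Fin l → ℂ) → ℂ) (z : Fin l → ℂ) (m : Fin l) : ℂ :=
  (1 / 2 : ℂ) *
    ((fderiv ℝ f z) (Pi.single m 1) + Complex.I * (fderiv ℝ f z) (Pi.single m Complex.I))

lemma conj_eq' (v : ℂ) : (starRingEnd ℂ) v = (v.re : ℂ) - (v.im : ℂ) * Complex.I := by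
  conv_lhs => rw [← Complex.re_add_im v]
  simp only [map_add, map_mul, Complex.conj_ofReal, Complex.conj_I]
  ring

lemma key_alg (A B v : ℂ) :
    v.re • A + v.im • B =
      (1/2 : ℂ) * (A - Complex.I * B) * v + (1/2 : ℂ) * (A + Complex.I * B) * (starRingEnd ℂ v) := by
  have h : ∀ x y : ℝ, (x:ℂ)*A + (y:ℂ)*B =
      (1/2 : ℂ) * (A - Complex.I * B) * ((x:ℂ)+(y:ℂ)*Complex.I)
        + (1/2 : ℂ) * (A + Complex.I * B) * ((x:ℂ)-(y:ℂ)*Complex.I) := by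
    intro x y
    linear_combination ((y:ℂ) * B) * Complex.I_mul_I
  rw [Complex.real_smul, Complex.real_smul, conj_eq']
  nth_rewrite 3 [← Complex.re_add_im v]
  exact h v.re v.im

lemma single_decomp {l : ℕ} (k : Fin l) (c : ℂ) :
    (Pi.single k c : Fin l → ℂ) = c.re • (Pi.single k 1 : Fin l → ℂ) + c.im • (Pi.single k Complex.I : Fin l → ℂ) := by
  funext j
  rcases eq_or_ne j k with h | h
  · subst h; simp [Complex.real_smul, Complex.re_add_im]
  · simp [Pi.single_eq_of_ne h]

lemma fderiv_expand {l : ℕ} (g : (Fin l → ℂ) → ℂ) (hg : Differentiable ℝ g)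
    (z v : Fin l → ℂ) :
    fderiv ℝ g z v = ∑ k, (wD g z k * v k + wDbar g z k * (starRingEnd ℂ) (v k)) := by
  have hv : v = ∑ k, Pi.single k (v k) := by
    simp [Finset.univ_sum_single]
  nth_rewrite 1 [hv]
  rw [map_sum]
  refine Finset.sum_congr rfl fun k _ => ?_
  rw [single_decomp, map_add, map_smul, map_smul, wD, wDbar]
  exact key_alg _ _ _

lemma fderiv_opnorm_le {l : ℕ} (g : (Fin l → ℂ) → ℂ) (z : Fin l → ℂ) :
    ‖fderiv ℝ g z‖ ≤ ∑ m, (‖wD g z m‖ + ‖wDbar g z m‖) := by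
  refine ContinuousLinearMap.opNorm_le_bound _ (by positivity) fun v => ?_
  rw [show (fderiv ℝ g z) v = ∑ k, (wD g z k * v k + wDbar g z k * (starRingEnd ℂ) (v k)) from by
    have : v = ∑ k, Pi.single k (v k) := by simp [Finset.univ_sum_single]
    nth_rewrite 1 [this]
    rw [map_sum]
    refine Finset.sum_congr rfl fun k _ => ?_
    rw [single_decomp, map_add, map_smul, map_smul, wD, wDbar]
    exact key_alg _ _ _]
  calc ‖∑ k, (wD g z k * v k + wDbar g z k * (starRingEnd ℂ) (v k))‖
      ≤ ∑ k, ‖wD g z k * v k + wDbar g z k * (starRingEnd ℂ) (v k)‖ := norm_sum_le _ _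
    _ ≤ ∑ k, (‖wD g z k‖ + ‖wDbar g z k‖) * ‖v‖ := by
        refine Finset.sum_le_sum fun k _ => ?_
        calc ‖wD g z k * v k + wDbar g z k * (starRingEnd ℂ) (v k)‖
            ≤ ‖wD g z k * v k‖ + ‖wDbar g z k * (starRingEnd ℂ) (v k)‖ := norm_add_le _ _
          _ = ‖wD g z k‖ * ‖v k‖ + ‖wDbar g z k‖ * ‖v k‖ := by
              simp [map_mul]
          _ ≤ ‖wD g z k‖ * ‖v‖ + ‖wDbar g z k‖ * ‖v‖ := by
              have h1 := norm_le_pi_norm v k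
              have h2 : (0:ℝ) ≤ ‖wD g z k‖ := norm_nonneg _
              have h3 : (0:ℝ) ≤ ‖wDbar g z k‖ := norm_nonneg _
              nlinarith
          _ = (‖wD g z k‖ + ‖wDbar g z k‖) * ‖v‖ := by ring
    _ = (∑ m, (‖wD g z m‖ + ‖wDbar g z m‖)) * ‖v‖ := by
        rw [Finset.sum_mul]

lemma re_fderiv_le {l : ℕ} (F : (Fin l → ℂ) → ℂ) (f : Fin l → (Fin l → ℂ) → ℂ)
    (hH3 : ∀ (z : Fin l → ℂ) (k : Fin l),
      f k z = wDbar F z k + starRingEnd ℂ (wD F z k))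
    (hF : Differentiable ℝ F) (z v : Fin l → ℂ) :
    |((fderiv ℝ F z) v).re| ≤ (∑ k, ‖f k z‖) * ‖v‖ := by
  rw [fderiv_expand F hF z v]
  have hre : (∑ k, (wD F z k * v k + wDbar F z k * (starRingEnd ℂ) (v k))).re
      = ∑ k, (f k z * (starRingEnd ℂ) (v k)).re := by
    rw [Complex.re_sum]
    refine Finset.sum_congr rfl fun k _ => ?_
    rw [hH3, add_mul, Complex.add_re, Complex.add_re]
    have h1 : (wD F z k * v k).re = ((starRingEnd ℂ) (wD F z k) * (starRingEnd ℂ) (v k)).re := by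
      rw [← map_mul]; exact (Complex.conj_re _).symm
    rw [h1]; exact add_comm _ _
  rw [hre]
  calc |∑ k, (f k z * (starRingEnd ℂ) (v k)).re|
      ≤ ∑ k, |(f k z * (starRingEnd ℂ) (v k)).re| := Finset.abs_sum_le_sum_abs _ _
    _ ≤ ∑ k, ‖f k z‖ * ‖v‖ := by
        refine Finset.sum_le_sum fun k _ => ?_
        calc |(f k z * (starRingEnd ℂ) (v k)).re|
            ≤ ‖f k z * (starRingEnd ℂ) (v k)‖ := Complex.abs_re_le_norm _
          _ = ‖f k z‖ * ‖v k‖ := by simp [map_mul]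
          _ ≤ ‖f k z‖ * ‖v‖ :=
              mul_le_mul_of_nonneg_left (norm_le_pi_norm v k) (norm_nonneg _)
    _ = (∑ k, ‖f k z‖) * ‖v‖ := by rw [Finset.sum_mul]

set_option maxHeartbeats 2000000 in
theorem statement4 (d l : ℕ) (hd : 3 ≤ d) (hl : 1 ≤ l)
    (f : Fin l → (Fin l → ℂ) → ℂ)
    (hdiff : ∀ k, Differentiable ℝ (f k))
    (hH1 : ∀ k, f k 0 = 0)
    (C : ℝ) (hC : 0 < C)
    (hH2 : ∀ (z z' : Fin l → ℂ) (k m : Fin l),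
      ‖wD (f k) z m - wD (f k) z' m‖ +
        ‖wDbar (f k) z m - wDbar (f k) z' m‖ ≤
      C * ∑ j, ‖z j - z' j‖ ^ ((4 : ℝ) / ((d : ℝ) - 2)))
    (F : (Fin l → ℂ) → ℂ) (hF : Differentiable ℝ F)
    (hH3 : ∀ (z : Fin l → ℂ) (k : Fin l),
      f k z = wDbar F z k + starRingEnd ℂ (wD F z k))
    (hH5 : ∀ lam : ℝ, 0 < lam → ∀ z : Fin l → ℂ,
      F (fun j => (lam : ℂ) * z j) =
        ((lam ^ ((2 * (d : ℝ)) / ((d : ℝ) - 2)) : ℝ) : ℂ) * F z) :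
    ∃ C' > 0, ∀ z z' : Fin l → ℂ,
      |(F z).re - (F z').re| ≤
        C' * ∑ m, ∑ j,
          (‖z j‖ ^ (((d : ℝ) + 2) / ((d : ℝ) - 2)) +
            ‖z' j‖ ^ (((d : ℝ) + 2) / ((d : ℝ) - 2))) *
            ‖z m - z' m‖ := by
  have hd3 : (3:ℝ) ≤ (d:ℝ) := by exact_mod_cast hd
  have hd2 : (0:ℝ) < (d:ℝ) - 2 := by linarith
  have hl0 : (0:ℝ) < (l:ℝ) := by exact_mod_cast Nat.lt_of_lt_of_le Nat.zero_lt_one hl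
  set q : ℝ := 4 / ((d:ℝ) - 2) with hq_def
  set p : ℝ := ((d:ℝ) + 2) / ((d:ℝ) - 2) with hp_def
  set r : ℝ := (2*(d:ℝ)) / ((d:ℝ) - 2) with hr_def
  have hq0 : 0 < q := by rw [hq_def]; positivity
  have hp0 : 0 < p := by rw [hp_def]; positivity
  have hqp : q + 1 = p := by rw [hq_def, hp_def]; field_simp; ring
  have hqr : q + 2 = r := by rw [hq_def, hr_def]; field_simp; ring
  have hr2 : 2 < r := by
    rw [hr_def, lt_div_iff₀ hd2]; linarith
  obtain ⟨A0, hA0_def⟩ : ∃ A0 : ℝ, A0 = ∑ k : Fin l, ∑ m : Fin l,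
      (‖wD (f k) 0 m‖ + ‖wDbar (f k) 0 m‖) := ⟨_, rfl⟩
  have hA0 : 0 ≤ A0 := by
    rw [hA0_def]
    exact Finset.sum_nonneg fun k _ => Finset.sum_nonneg fun m _ =>
      add_nonneg (norm_nonneg _) (norm_nonneg _)
  -- Step 1: derivative bound for f k
  have hfd : ∀ (k : Fin l) (u : Fin l → ℂ),
      ‖fderiv ℝ (f k) u‖ ≤
        (∑ m, (‖wD (f k) 0 m‖ + ‖wDbar (f k) 0 m‖))
          + (l:ℝ) * (C * ∑ j, ‖u j‖ ^ q) := by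
    intro k u
    refine (fderiv_opnorm_le (f k) u).trans ?_
    have hm : ∀ m : Fin l, ‖wD (f k) u m‖ + ‖wDbar (f k) u m‖ ≤
        (‖wD (f k) 0 m‖ + ‖wDbar (f k) 0 m‖)
          + C * ∑ j, ‖u j‖ ^ q := by
      intro m
      have h2 := hH2 u 0 k m
      simp only [Pi.zero_apply, sub_zero] at h2
      have t1 : ‖wD (f k) u m‖ ≤
          ‖wD (f k) 0 m‖ + ‖wD (f k) u m - wD (f k) 0 m‖ := by
        calc ‖wD (f k) u m‖
            = ‖wD (f k) 0 m + (wD (f k) u m - wD (f k) 0 m)‖ := by ring_nf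
          _ ≤ _ := norm_add_le _ _
      have t2 : ‖wDbar (f k) u m‖ ≤
          ‖wDbar (f k) 0 m‖ + ‖wDbar (f k) u m - wDbar (f k) 0 m‖ := by
        calc ‖wDbar (f k) u m‖
            = ‖wDbar (f k) 0 m + (wDbar (f k) u m - wDbar (f k) 0 m)‖ := by ring_nf
          _ ≤ _ := norm_add_le _ _
      linarith
    calc (∑ m, (‖wD (f k) u m‖ + ‖wDbar (f k) u m‖))
        ≤ ∑ m : Fin l, ((‖wD (f k) 0 m‖ + ‖wDbar (f k) 0 m‖)
            + C * ∑ j, ‖u j‖ ^ q) := Finset.sum_le_sum fun m _ => hm m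
      _ = (∑ m, (‖wD (f k) 0 m‖ + ‖wDbar (f k) 0 m‖))
            + (l:ℝ) * (C * ∑ j, ‖u j‖ ^ q) := by
          rw [Finset.sum_add_distrib, Finset.sum_const, Finset.card_univ, Fintype.card_fin,
            nsmul_eq_mul]
  -- Step 2: pointwise bound for f k under componentwise domination
  have hfb : ∀ (k : Fin l) (w : Fin l → ℂ) (b : Fin l → ℝ), (∀ j, ‖w j‖ ≤ b j) →
      ‖f k w‖ ≤
        ((∑ m, (‖wD (f k) 0 m‖ + ‖wDbar (f k) 0 m‖))
          + (l:ℝ) * (C * ∑ j, (b j) ^ q)) * (∑ j, b j) := by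
    intro k w b hb
    have hb0 : ∀ j, 0 ≤ b j := fun j => (norm_nonneg _).trans (hb j)
    obtain ⟨K, hK_def⟩ : ∃ K : ℝ, K = (∑ m, (‖wD (f k) 0 m‖
        + ‖wDbar (f k) 0 m‖)) + (l:ℝ) * (C * ∑ j, (b j) ^ q) := ⟨_, rfl⟩
    rw [← hK_def]
    have hK0 : 0 ≤ K := by
      rw [hK_def]
      have h1 : 0 ≤ ∑ j, (b j) ^ q := Finset.sum_nonneg fun j _ => Real.rpow_nonneg (hb0 j) q
      have h2 : 0 ≤ ∑ m, (‖wD (f k) 0 m‖ + ‖wDbar (f k) 0 m‖) :=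
        Finset.sum_nonneg fun m _ => add_nonneg (norm_nonneg _) (norm_nonneg _)
      have h3 : (0:ℝ) ≤ (l:ℝ) * (C * ∑ j, (b j) ^ q) :=
        mul_nonneg hl0.le (mul_nonneg hC.le h1)
      linarith
    have hseg : ∀ x ∈ segment ℝ (0 : Fin l → ℂ) w, ‖fderiv ℝ (f k) x‖ ≤ K := by
      intro x hx
      obtain ⟨a, c, ha, hc, hac, hx⟩ := hx
      refine (hfd k x).trans ?_
      rw [hK_def]
      have hxj : ∀ j, ‖x j‖ ≤ b j := by
        intro j
        have hxe : x j = a • (0:ℂ) + c • w j := by rw [← hx]; simp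
        rw [hxe]
        simp only [smul_zero, zero_add]
        calc ‖c • w j‖ = ‖c • w j‖ := rfl
          _ = |c| * ‖w j‖ := norm_smul _ _
          _ = c * ‖w j‖ := by rw [_root_.abs_of_nonneg hc]
          _ ≤ 1 * (b j) := by
              have h1 := hb j
              have hc1 : c ≤ 1 := by linarith
              have h2 := norm_nonneg (w j)
              nlinarith
          _ = b j := one_mul _
      have hsum : ∑ j, ‖x j‖ ^ q ≤ ∑ j, (b j) ^ q :=
        Finset.sum_le_sum fun j _ => Real.rpow_le_rpow (norm_nonneg _) (hxj j) hq0.le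
      have hlC : (0:ℝ) ≤ (l:ℝ) * C := by positivity
      nlinarith
    have hmvt := Convex.norm_image_sub_le_of_norm_fderiv_le
      (fun x _ => (hdiff k).differentiableAt) hseg (convex_segment _ _)
      (left_mem_segment ℝ (0 : Fin l → ℂ) w) (right_mem_segment ℝ (0 : Fin l → ℂ) w)
    rw [hH1 k, sub_zero, sub_zero] at hmvt
    calc ‖f k w‖ = ‖f k w‖ := rfl
      _ ≤ K * ‖w‖ := hmvt
      _ ≤ K * ∑ j, b j := by
          refine mul_le_mul_of_nonneg_left ?_ hK0
          refine pi_norm_le_iff_of_nonneg (Finset.sum_nonneg fun j _ => hb0 j) |>.2 fun j => ?_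
          calc ‖w j‖ = ‖w j‖ := rfl
            _ ≤ b j := hb j
            _ ≤ ∑ i, b i := Finset.single_le_sum (fun i _ => hb0 i) (Finset.mem_univ j)
  -- Step 3: main intermediate inequality
  have main : ∀ z z' : Fin l → ℂ,
      |(F z).re - (F z').re| ≤
        (A0 + (l:ℝ)^3 * C * (∑ j, (‖z j‖ + ‖z' j‖)) ^ q)
          * (∑ j, (‖z j‖ + ‖z' j‖))
          * (∑ m, ‖z m - z' m‖) := by
    intro z z'
    obtain ⟨T, hT_def⟩ : ∃ T : ℝ, T = ∑ j, (‖z j‖ + ‖z' j‖) := ⟨_, rfl⟩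
    rw [← hT_def]
    have ha0 : ∀ j, (0:ℝ) ≤ ‖z j‖ + ‖z' j‖ := fun j =>
      add_nonneg (norm_nonneg _) (norm_nonneg _)
    have hT0 : 0 ≤ T := hT_def ▸ Finset.sum_nonneg fun j _ => ha0 j
    have hTq0 : 0 ≤ T ^ q := Real.rpow_nonneg hT0 q
    obtain ⟨K, hK_def⟩ : ∃ K : ℝ, K = (A0 + (l:ℝ)^3 * C * T ^ q) * T := ⟨_, rfl⟩
    rw [← hK_def]
    have hK0 : 0 ≤ K := by
      rw [hK_def]
      have h1 : (0:ℝ) ≤ (l:ℝ)^3 * C * T ^ q :=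
        mul_nonneg (mul_nonneg (pow_nonneg hl0.le 3) hC.le) hTq0
      exact mul_nonneg (add_nonneg hA0 h1) hT0
    -- bound Σ_k |f k x| for x in the segment
    have hsum : ∀ x ∈ segment ℝ z' z, (∑ k, ‖f k x‖) ≤ K := by
      intro x hx
      obtain ⟨c1, c2, hc1, hc2, hc12, hx⟩ := hx
      have hxj : ∀ j, ‖x j‖ ≤ ‖z j‖ + ‖z' j‖ := by
        intro j
        have hxe : x j = c1 • z' j + c2 • z j := by rw [← hx]; simp
        rw [hxe]
        calc ‖c1 • z' j + c2 • z j‖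
            = ‖c1 • z' j + c2 • z j‖ := rfl
          _ ≤ ‖c1 • z' j‖ + ‖c2 • z j‖ := norm_add_le _ _
          _ = c1 * ‖z' j‖ + c2 * ‖z j‖ := by
              rw [norm_smul, norm_smul, Real.norm_eq_abs, Real.norm_eq_abs,
                _root_.abs_of_nonneg hc1, _root_.abs_of_nonneg hc2]
          _ ≤ ‖z j‖ + ‖z' j‖ := by
              have h1 := norm_nonneg (z' j)
              have h2 := norm_nonneg (z j)
              have hc1' : c1 ≤ 1 := by linarith
              have hc2' : c2 ≤ 1 := by linarith
              nlinarith
      have haq : ∀ j, (‖z j‖ + ‖z' j‖) ^ q ≤ T ^ q := fun j =>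
        Real.rpow_le_rpow (ha0 j)
          (hT_def ▸ Finset.single_le_sum (fun i _ => ha0 i) (Finset.mem_univ j)) hq0.le
      have hSq : ∑ j, (‖z j‖ + ‖z' j‖) ^ q ≤ (l:ℝ) * T ^ q := by
        calc ∑ j, (‖z j‖ + ‖z' j‖) ^ q
            ≤ ∑ _j : Fin l, T ^ q := Finset.sum_le_sum fun j _ => haq j
          _ = (l:ℝ) * T ^ q := by
              rw [Finset.sum_const, Finset.card_univ, Fintype.card_fin, nsmul_eq_mul]
      calc (∑ k, ‖f k x‖)
          ≤ ∑ k, (((∑ m, (‖wD (f k) 0 m‖ + ‖wDbar (f k) 0 m‖))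
              + (l:ℝ) * (C * ∑ j, (‖z j‖ + ‖z' j‖) ^ q))
              * (∑ j, (‖z j‖ + ‖z' j‖))) :=
            Finset.sum_le_sum fun k _ => hfb k x _ hxj
        _ = ((A0 + (l:ℝ)^2 * C * ∑ j, (‖z j‖ + ‖z' j‖) ^ q)) * T := by
            rw [← Finset.sum_mul, Finset.sum_add_distrib, ← hA0_def, Finset.sum_const,
              Finset.card_univ, Fintype.card_fin, nsmul_eq_mul, ← hT_def]
            ring_nf
        _ ≤ K := by
            rw [hK_def]
            have h1 : (l:ℝ)^2 * C * (∑ j, (‖z j‖ + ‖z' j‖) ^ q)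
                ≤ (l:ℝ)^2 * C * ((l:ℝ) * T ^ q) :=
              mul_le_mul_of_nonneg_left hSq (by positivity)
            nlinarith
    -- MVT for Re ∘ F
    have hgd : ∀ x, DifferentiableAt ℝ (fun w => Complex.reCLM (F w)) x := fun x =>
      Complex.reCLM.differentiableAt.comp x (hF x)
    have hgderiv : ∀ x, fderiv ℝ (fun w => Complex.reCLM (F w)) x
        = Complex.reCLM.comp (fderiv ℝ F x) := fun x =>
      (Complex.reCLM.hasFDerivAt.comp x (hF x).hasFDerivAt).fderiv
    have hgb : ∀ x ∈ segment ℝ z' z, ‖fderiv ℝ (fun w => Complex.reCLM (F w)) x‖ ≤ K := by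
      intro x hx
      rw [hgderiv x]
      refine ContinuousLinearMap.opNorm_le_bound _ hK0 fun v => ?_
      calc ‖(Complex.reCLM.comp (fderiv ℝ F x)) v‖ = |((fderiv ℝ F x) v).re| := rfl
        _ ≤ (∑ k, ‖f k x‖) * ‖v‖ := re_fderiv_le F f hH3 hF x v
        _ ≤ K * ‖v‖ := mul_le_mul_of_nonneg_right (hsum x hx) (norm_nonneg v)
    have hmvt := Convex.norm_image_sub_le_of_norm_fderiv_le
      (fun x _ => hgd x) hgb (convex_segment _ _)
      (left_mem_segment ℝ z' z) (right_mem_segment ℝ z' z)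
    have hDn : ‖z - z'‖ ≤ ∑ m, ‖z m - z' m‖ := by
      refine pi_norm_le_iff_of_nonneg (Finset.sum_nonneg fun m _ => norm_nonneg _)
        |>.2 fun m => ?_
      calc ‖(z - z') m‖ = ‖z m - z' m‖ := rfl
        _ ≤ ∑ i, ‖z i - z' i‖ :=
            Finset.single_le_sum (f := fun i => ‖z i - z' i‖)
              (fun i _ => norm_nonneg _) (Finset.mem_univ m)
    calc |(F z).re - (F z').re| = ‖(fun w => Complex.reCLM (F w)) z
          - (fun w => Complex.reCLM (F w)) z'‖ := rfl
      _ ≤ K * ‖z - z'‖ := hmvt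
      _ ≤ K * ∑ m, ‖z m - z' m‖ := mul_le_mul_of_nonneg_left hDn hK0
  -- Step 4: scaling kills the A0 term
  have scaled : ∀ z z' : Fin l → ℂ,
      |(F z).re - (F z').re| ≤
        (l:ℝ)^3 * C * (∑ j, (‖z j‖ + ‖z' j‖)) ^ p
          * (∑ m, ‖z m - z' m‖) := by
    intro z z'
    obtain ⟨T, hT_def⟩ : ∃ T : ℝ, T = ∑ j, (‖z j‖ + ‖z' j‖) := ⟨_, rfl⟩
    obtain ⟨D, hD_def⟩ : ∃ D : ℝ, D = ∑ m, ‖z m - z' m‖ := ⟨_, rfl⟩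
    rw [← hT_def, ← hD_def]
    have ha0 : ∀ j, (0:ℝ) ≤ ‖z j‖ + ‖z' j‖ := fun j =>
      add_nonneg (norm_nonneg _) (norm_nonneg _)
    have hT0 : 0 ≤ T := hT_def ▸ Finset.sum_nonneg fun j _ => ha0 j
    have hD0 : 0 ≤ D := hD_def ▸ Finset.sum_nonneg fun m _ => norm_nonneg _
    rcases eq_or_lt_of_le hT0 with hT | hT
    · -- degenerate case : z = z' = 0
      have hzz : z = z' := by
        have hall : ∀ j ∈ Finset.univ, ‖z j‖ + ‖z' j‖ = 0 :=
          (Finset.sum_eq_zero_iff_of_nonneg fun j _ => ha0 j).1 (hT_def ▸ hT.symm)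
        funext j
        have hj := hall j (Finset.mem_univ j)
        have h1 := norm_nonneg (z j)
        have h2 := norm_nonneg (z' j)
        have hz1 : ‖z j‖ = 0 := by linarith
        have hz2 : ‖z' j‖ = 0 := by linarith
        rw [norm_eq_zero] at hz1 hz2
        rw [hz1, hz2]
      rw [hzz, sub_self, abs_zero]
      exact mul_nonneg (mul_nonneg (mul_nonneg (pow_nonneg hl0.le 3) hC.le)
        (Real.rpow_nonneg hT0 p)) hD0
    · -- nondegenerate case : scaling + limit
      have hlim0 : Filter.Tendsto (fun lam : ℝ => lam ^ (2 - r)) Filter.atTop (nhds 0) := by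
        have h := tendsto_rpow_neg_atTop (by linarith : (0:ℝ) < r - 2)
        have : (fun lam : ℝ => lam ^ (2 - r)) = fun lam : ℝ => lam ^ (-(r - 2)) := by
          funext lam; ring_nf
        rw [this]; exact h
      have hlim : Filter.Tendsto (fun lam : ℝ =>
          A0 * (T * D) * lam ^ (2 - r) + (l:ℝ)^3 * C * T ^ p * D) Filter.atTop
          (nhds (A0 * (T * D) * 0 + (l:ℝ)^3 * C * T ^ p * D)) :=
        (hlim0.const_mul _).add_const _
      rw [mul_zero, zero_add] at hlim
      refine ge_of_tendsto hlim ?_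
      filter_upwards [Filter.eventually_gt_atTop (0:ℝ)] with lam hlam
      have hrp : (0:ℝ) < lam ^ r := Real.rpow_pos_of_pos hlam r
      have habs : ∀ c : ℂ, ‖(lam:ℂ) * c‖ = lam * ‖c‖ := by
        intro c; rw [norm_mul, Complex.norm_real, Real.norm_eq_abs, _root_.abs_of_pos hlam]
      have hmain := main (fun j => (lam:ℂ) * z j) (fun j => (lam:ℂ) * z' j)
      have hTs : ∑ j, (‖(lam:ℂ) * z j‖ + ‖(lam:ℂ) * z' j‖)
          = lam * T := by
        rw [hT_def, Finset.mul_sum]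
        exact Finset.sum_congr rfl fun j _ => by rw [habs, habs]; ring
      have hDs : ∑ m, ‖(lam:ℂ) * z m - (lam:ℂ) * z' m‖ = lam * D := by
        rw [hD_def, Finset.mul_sum]
        refine Finset.sum_congr rfl fun m _ => ?_
        rw [← mul_sub, habs]
      have hFs : ((F fun j => (lam:ℂ) * z j).re - (F fun j => (lam:ℂ) * z' j).re)
          = lam ^ r * ((F z).re - (F z').re) := by
        rw [hH5 lam hlam z, hH5 lam hlam z']
        simp only [Complex.mul_re, Complex.ofReal_re, Complex.ofReal_im]
        ring
      rw [hTs, hDs, hFs, abs_mul, _root_.abs_of_pos hrp,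
        Real.mul_rpow hlam.le hT0] at hmain
      have h1 : lam ^ r = lam ^ q * lam * lam := by
        rw [← hqr, show q + 2 = q + 1 + 1 by ring, Real.rpow_add hlam, Real.rpow_add hlam,
          Real.rpow_one]
      have h2 : lam ^ (2 - r) * lam ^ r = lam * lam := by
        rw [← Real.rpow_add hlam, show 2 - r + r = 1 + 1 by ring, Real.rpow_add hlam,
          Real.rpow_one]
      have h3 : T ^ p = T ^ q * T := by
        rw [← hqp, Real.rpow_add hT, Real.rpow_one]
      have hEq : (A0 + (l:ℝ)^3 * C * (lam ^ q * T ^ q)) * (lam * T) * (lam * D)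
          = (A0 * (T * D) * lam ^ (2 - r) + (l:ℝ)^3 * C * T ^ p * D) * lam ^ r := by
        linear_combination (-(A0 * T * D)) * h2 + (-((l:ℝ)^3 * C * D * lam ^ r)) * h3
          + (-((l:ℝ)^3 * C * D * (T ^ q * T))) * h1
      rw [hEq] at hmain
      calc |(F z).re - (F z').re|
          = lam ^ r * |(F z).re - (F z').re| / lam ^ r := by field_simp
        _ ≤ (A0 * (T * D) * lam ^ (2 - r) + (l:ℝ)^3 * C * T ^ p * D) * lam ^ r / lam ^ r := by
            exact (div_le_div_iff_of_pos_right hrp).2 hmain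
        _ = A0 * (T * D) * lam ^ (2 - r) + (l:ℝ)^3 * C * T ^ p * D := by field_simp
  -- Step 5: conclude
  refine ⟨(l:ℝ)^3 * C * ((2*(l:ℝ)) ^ p), by positivity, fun z z' => ?_⟩
  obtain ⟨T, hT_def⟩ : ∃ T : ℝ, T = ∑ j, (‖z j‖ + ‖z' j‖) := ⟨_, rfl⟩
  obtain ⟨D, hD_def⟩ : ∃ D : ℝ, D = ∑ m, ‖z m - z' m‖ := ⟨_, rfl⟩
  have ha0 : ∀ j, (0:ℝ) ≤ ‖z j‖ + ‖z' j‖ := fun j =>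
    add_nonneg (norm_nonneg _) (norm_nonneg _)
  have hT0 : 0 ≤ T := hT_def ▸ Finset.sum_nonneg fun j _ => ha0 j
  have hD0 : 0 ≤ D := hD_def ▸ Finset.sum_nonneg fun m _ => norm_nonneg _
  have hscaled := scaled z z'
  rw [← hT_def, ← hD_def] at hscaled
  have hRHS : ∑ m, ∑ j, ((‖z j‖) ^ p + (‖z' j‖) ^ p)
      * ‖z m - z' m‖
      = (∑ j, ((‖z j‖) ^ p + (‖z' j‖) ^ p)) * D := by
    rw [hD_def, Finset.mul_sum]
    refine Finset.sum_congr rfl fun m _ => ?_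
    rw [Finset.sum_mul]
  rw [hRHS]
  obtain ⟨M, hM_def⟩ : ∃ M : ℝ, M = ∑ j, ((‖z j‖) ^ p + (‖z' j‖) ^ p) :=
    ⟨_, rfl⟩
  rw [← hM_def]
  have hM0 : 0 ≤ M := hM_def ▸ Finset.sum_nonneg fun j _ =>
    add_nonneg (Real.rpow_nonneg (norm_nonneg _) p)
      (Real.rpow_nonneg (norm_nonneg _) p)
  -- T ^ p ≤ (2l)^p * M
  have : Nonempty (Fin l) := ⟨⟨0, hl⟩⟩
  obtain ⟨j0, _, hj0⟩ := Finset.exists_max_image Finset.univ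
    (fun j => ‖z j‖ + ‖z' j‖) Finset.univ_nonempty
  have hTle : T ≤ (l:ℝ) * (‖z j0‖ + ‖z' j0‖) := by
    rw [hT_def]
    calc ∑ j, (‖z j‖ + ‖z' j‖)
        ≤ ∑ _j : Fin l, (‖z j0‖ + ‖z' j0‖) :=
          Finset.sum_le_sum fun j _ => hj0 j (Finset.mem_univ j)
      _ = (l:ℝ) * (‖z j0‖ + ‖z' j0‖) := by
          rw [Finset.sum_const, Finset.card_univ, Fintype.card_fin, nsmul_eq_mul]
  have hstep1 : T ^ p ≤ (l:ℝ) ^ p * (‖z j0‖ + ‖z' j0‖) ^ p := by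
    rw [← Real.mul_rpow hl0.le (ha0 j0)]
    exact Real.rpow_le_rpow hT0 hTle hp0.le
  have hstep2 : (‖z j0‖ + ‖z' j0‖) ^ p
      ≤ (2:ℝ) ^ p * ((‖z j0‖) ^ p + (‖z' j0‖) ^ p) := by
    have h1 := norm_nonneg (z j0)
    have h2 := norm_nonneg (z' j0)
    rcases le_total (‖z j0‖) (‖z' j0‖) with h | h
    · calc (‖z j0‖ + ‖z' j0‖) ^ p
          ≤ (2 * ‖z' j0‖) ^ p :=
            Real.rpow_le_rpow (by linarith) (by linarith) hp0.le
        _ = (2:ℝ) ^ p * (‖z' j0‖) ^ p := Real.mul_rpow (by norm_num) h2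
        _ ≤ (2:ℝ) ^ p * ((‖z j0‖) ^ p + (‖z' j0‖) ^ p) := by
            have h3 : (0:ℝ) ≤ (‖z j0‖) ^ p := Real.rpow_nonneg h1 p
            have h4 : (0:ℝ) ≤ (2:ℝ) ^ p := Real.rpow_nonneg (by norm_num) p
            nlinarith
    · calc (‖z j0‖ + ‖z' j0‖) ^ p
          ≤ (2 * ‖z j0‖) ^ p :=
            Real.rpow_le_rpow (by linarith) (by linarith) hp0.le
        _ = (2:ℝ) ^ p * (‖z j0‖) ^ p := Real.mul_rpow (by norm_num) h1
        _ ≤ (2:ℝ) ^ p * ((‖z j0‖) ^ p + (‖z' j0‖) ^ p) := by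
            have h3 : (0:ℝ) ≤ (‖z' j0‖) ^ p := Real.rpow_nonneg h2 p
            have h4 : (0:ℝ) ≤ (2:ℝ) ^ p := Real.rpow_nonneg (by norm_num) p
            nlinarith
  have hstep3 : (‖z j0‖) ^ p + (‖z' j0‖) ^ p ≤ M := by
    rw [hM_def]
    exact Finset.single_le_sum
      (f := fun j => (‖z j‖) ^ p + (‖z' j‖) ^ p)
      (fun j _ => add_nonneg (Real.rpow_nonneg (norm_nonneg _) p)
        (Real.rpow_nonneg (norm_nonneg _) p)) (Finset.mem_univ j0)
  have hTp : T ^ p ≤ (2*(l:ℝ)) ^ p * M := by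
    have h2l : (2*(l:ℝ)) ^ p = (2:ℝ) ^ p * (l:ℝ) ^ p := Real.mul_rpow (by norm_num) hl0.le
    have hlp : (0:ℝ) ≤ (l:ℝ) ^ p := Real.rpow_nonneg hl0.le p
    have h2p : (0:ℝ) ≤ (2:ℝ) ^ p := Real.rpow_nonneg (by norm_num) p
    calc T ^ p ≤ (l:ℝ) ^ p * (‖z j0‖ + ‖z' j0‖) ^ p := hstep1
      _ ≤ (l:ℝ) ^ p * ((2:ℝ) ^ p * ((‖z j0‖) ^ p + (‖z' j0‖) ^ p)) :=
          mul_le_mul_of_nonneg_left hstep2 hlp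
      _ ≤ (l:ℝ) ^ p * ((2:ℝ) ^ p * M) :=
          mul_le_mul_of_nonneg_left (mul_le_mul_of_nonneg_left hstep3 h2p) hlp
      _ = (2*(l:ℝ)) ^ p * M := by rw [h2l]; ring
  calc |(F z).re - (F z').re|
      ≤ (l:ℝ)^3 * C * T ^ p * D := hscaled
    _ ≤ (l:ℝ)^3 * C * ((2*(l:ℝ)) ^ p * M) * D := by
        have hc3 : (0:ℝ) ≤ (l:ℝ)^3 * C := by positivity
        exact mul_le_mul_of_nonneg_right (mul_le_mul_of_nonneg_left hTp hc3) hD0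
    _ = (l:ℝ)^3 * C * ((2*(l:ℝ)) ^ p) * (M * D) := by ring
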